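/- Hook Relation: Let A be a sequence of distinct reals with EST points t_i = (a_i^+, a_i^-). Suppose i < j and there exists a natural number x with a_i^+ ≤ x ≤ a_j^+ such that no index k ≤ j satisfies a_k^+ = x and a_k^- > a_i^-. Then a_i < a_j. -/

import Mathlib

/-- Length of the longest strictly increasing subsequence of `a` ending at index `i`. -/
noncomputable def incLen {n : ℕ} (a : Fin n → ℝ) (i : Fin n) : ℕ :=
  sSup {m | ∃ σ : Fin (m + 1) → Fin n,
    StrictMono σ ∧ StrictMono (a ∘ σ) ∧ σ (Fin.last m) = i} + 1

/-- Length of the longest strictly decreasing subsequence of `a` ending at index `i`. -/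
noncomputable def decLen {n : ℕ} (a : Fin n → ℝ) (i : Fin n) : ℕ :=
  sSup {m | ∃ σ : Fin (m + 1) → Fin n,
    StrictMono σ ∧ StrictAnti (a ∘ σ) ∧ σ (Fin.last m) = i} + 1

namespace HookAux

lemma strictMono_snoc {m : ℕ} {α : Type*} [Preorder α] {f : Fin (m+1) → α} {x : α}
    (hf : StrictMono f) (hx : f (Fin.last m) < x) : StrictMono (Fin.snoc f x) := by
  rw [Fin.strictMono_iff_lt_succ]
  intro p
  induction p using Fin.lastCases with
  | last =>
    rw [Fin.succ_last, Fin.snoc_last, Fin.snoc_castSucc]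
    exact lt_of_le_of_lt (hf.monotone (Fin.le_last _)) hx
  | cast q =>
    simp only [Fin.succ_castSucc, Fin.snoc_castSucc]
    exact hf (Fin.castSucc_lt_succ : q.castSucc < q.succ)

lemma strictAnti_snoc {m : ℕ} {α : Type*} [Preorder α] {f : Fin (m+1) → α} {x : α}
    (hf : StrictAnti f) (hx : x < f (Fin.last m)) : StrictAnti (Fin.snoc f x) := by
  rw [Fin.strictAnti_iff_succ_lt]
  intro p
  induction p using Fin.lastCases with
  | last =>
    rw [Fin.succ_last, Fin.snoc_last, Fin.snoc_castSucc]
    exact lt_of_lt_of_le hx (hf.antitone (Fin.le_last _))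
  | cast q =>
    simp only [Fin.succ_castSucc, Fin.snoc_castSucc]
    exact hf (Fin.castSucc_lt_succ : q.castSucc < q.succ)

variable {n : ℕ} (a : Fin n → ℝ)

def SInc (i : Fin n) : Set ℕ := {m | ∃ σ : Fin (m + 1) → Fin n,
    StrictMono σ ∧ StrictMono (a ∘ σ) ∧ σ (Fin.last m) = i}

def SDec (i : Fin n) : Set ℕ := {m | ∃ σ : Fin (m + 1) → Fin n,
    StrictMono σ ∧ StrictAnti (a ∘ σ) ∧ σ (Fin.last m) = i}

lemma incLen_eq (i : Fin n) : incLen a i = sSup (SInc a i) + 1 := rfl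
lemma decLen_eq (i : Fin n) : decLen a i = sSup (SDec a i) + 1 := rfl

lemma sInc_nonempty (i : Fin n) : (SInc a i).Nonempty := by
  haveI : Subsingleton (Fin (0 + 1)) := Fin.subsingleton_one
  exact ⟨0, fun _ => i, Subsingleton.strictMono _, Subsingleton.strictMono _, rfl⟩

lemma sDec_nonempty (i : Fin n) : (SDec a i).Nonempty := by
  haveI : Subsingleton (Fin (0 + 1)) := Fin.subsingleton_one
  exact ⟨0, fun _ => i, Subsingleton.strictMono _, Subsingleton.strictAnti _, rfl⟩

lemma sInc_bdd (i : Fin n) : BddAbove (SInc a i) := by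
  refine ⟨n, fun m hm => ?_⟩
  obtain ⟨σ, hσ, -, -⟩ := hm
  have := Fintype.card_le_of_injective σ hσ.injective
  simp only [Fintype.card_fin] at this
  omega

lemma sDec_bdd (i : Fin n) : BddAbove (SDec a i) := by
  refine ⟨n, fun m hm => ?_⟩
  obtain ⟨σ, hσ, -, -⟩ := hm
  have := Fintype.card_le_of_injective σ hσ.injective
  simp only [Fintype.card_fin] at this
  omega

lemma sInc_mem (i : Fin n) : sSup (SInc a i) ∈ SInc a i :=
  Nat.sSup_mem (sInc_nonempty a i) (sInc_bdd a i)

lemma sDec_mem (i : Fin n) : sSup (SDec a i) ∈ SDec a i :=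
  Nat.sSup_mem (sDec_nonempty a i) (sDec_bdd a i)

lemma incLen_lt {k j : Fin n} (hkj : k < j) (hab : a k < a j) :
    incLen a k < incLen a j := by
  obtain ⟨σ, h1, h2, h3⟩ := sInc_mem a k
  have hmem : sSup (SInc a k) + 1 ∈ SInc a j := by
    refine ⟨Fin.snoc σ j, ?_, ?_, by simp⟩
    · exact strictMono_snoc h1 (by rw [h3]; exact hkj)
    · rw [Fin.comp_snoc]
      exact strictMono_snoc h2 (by simpa [Function.comp, h3] using hab)
  have := le_csSup (sInc_bdd a j) hmem
  simp only [incLen_eq]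
  omega

lemma decLen_lt {k j : Fin n} (hkj : k < j) (hab : a j < a k) :
    decLen a k < decLen a j := by
  obtain ⟨σ, h1, h2, h3⟩ := sDec_mem a k
  have hmem : sSup (SDec a k) + 1 ∈ SDec a j := by
    refine ⟨Fin.snoc σ j, ?_, ?_, by simp⟩
    · exact strictMono_snoc h1 (by rw [h3]; exact hkj)
    · rw [Fin.comp_snoc]
      exact strictAnti_snoc h2 (by simpa [Function.comp, h3] using hab)
  have := le_csSup (sDec_bdd a j) hmem
  simp only [decLen_eq]
  omega

lemma incLen_pred {j : Fin n} {m : ℕ} (h : incLen a j = m + 2) :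
    ∃ k, k < j ∧ a k < a j ∧ incLen a k = m + 1 := by
  have hsup : sSup (SInc a j) = m + 1 := by rw [incLen_eq] at h; omega
  obtain ⟨σ, h1, h2, h3⟩ : m + 1 ∈ SInc a j := hsup ▸ sInc_mem a j
  refine ⟨σ ((Fin.last m).castSucc), ?_, ?_, ?_⟩
  · rw [← h3]; exact h1 (Fin.castSucc_lt_last _)
  · rw [← h3]; exact h2 (Fin.castSucc_lt_last _)
  · have hge : m ∈ SInc a (σ ((Fin.last m).castSucc)) := by
      refine ⟨σ ∘ Fin.castSucc, h1.comp (fun _ _ h => by simpa using h),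
        h2.comp (fun _ _ h => by simpa using h), rfl⟩
    have h4 := le_csSup (sInc_bdd a _) hge
    have h5 : incLen a (σ ((Fin.last m).castSucc)) < incLen a j := by
      refine incLen_lt a ?_ ?_
      · rw [← h3]; exact h1 (Fin.castSucc_lt_last _)
      · rw [← h3]; exact h2 (Fin.castSucc_lt_last _)
    rw [h] at h5
    rw [incLen_eq] at h5 ⊢
    omega

lemma chain_aux : ∀ N (j : Fin n), j.val < N → ∀ m, 1 ≤ m → m ≤ incLen a j →
    ∃ k, k ≤ j ∧ a k ≤ a j ∧ incLen a k = m := by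
  intro N
  induction N with
  | zero => intro j hj; omega
  | succ N ih =>
    intro j hj m hm1 hm2
    rcases eq_or_lt_of_le hm2 with he | hlt
    · exact ⟨j, le_refl _, le_refl _, he.symm⟩
    · obtain ⟨L, hL⟩ : ∃ L, incLen a j = L + 2 := by
        have : 1 ≤ incLen a j := by rw [incLen_eq]; omega
        exact ⟨incLen a j - 2, by omega⟩
      obtain ⟨k, hk1, hk2, hk3⟩ := incLen_pred a hL
      obtain ⟨k', h1, h2, h3⟩ := ih k (by have := Fin.lt_def.mp hk1; omega) m hm1 (by omega)
      exact ⟨k', le_trans h1 (le_of_lt hk1), le_trans h2 (le_of_lt hk2), h3⟩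

lemma chain (j : Fin n) : ∀ m, 1 ≤ m → m ≤ incLen a j →
    ∃ k, k ≤ j ∧ a k ≤ a j ∧ incLen a k = m :=
  chain_aux a (j.val + 1) j (Nat.lt_succ_self _)

end HookAux

theorem hook_relation {n : ℕ} (a : Fin n → ℝ) (ha : Function.Injective a)
    (i j : Fin n) (hij : i < j) (x : ℕ)
    (hx1 : incLen a i ≤ x) (hx2 : x ≤ incLen a j)
    (hempty : ∀ k : Fin n, k ≤ j → ¬(incLen a k = x ∧ decLen a k > decLen a i)) :
    a i < a j := by
  by_contra h
  push_neg at h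
  have hne : a j ≠ a i := fun he => absurd (ha he) (ne_of_gt hij)
  have hji : a j < a i := lt_of_le_of_ne h hne
  have hx0 : 1 ≤ x := le_trans (by rw [HookAux.incLen_eq]; omega) hx1
  obtain ⟨k, hk1, hk2, hk3⟩ := HookAux.chain a j x hx0 hx2
  have hkia : a k < a i := lt_of_le_of_lt hk2 hji
  rcases lt_trichotomy k i with hc | hc | hc
  · have := HookAux.incLen_lt a hc hkia
    omega
  · rw [hc] at hkia; exact absurd hkia (lt_irrefl _)
  · exact hempty k hk1 ⟨hk3, HookAux.decLen_lt a hc hkia⟩
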